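/- Let p > 1 and define f(x) = x^{p−1}ln(1+x) for x ≥ 0, with primitive F(x) = ∫₀ˣ f(s)ds. Then f fails the Ambrosetti–Rabinowitz condition: for every γ > p there is no M > 0 such that γF(x) ≤ f(x)x for all x ≥ M. -/

import Mathlib

open Set Filter

/-- `f(x) = x^{p-1} ln(1+x)` fails the Ambrosetti–Rabinowitz condition: for every
`γ > p` there is no `M > 0` with `γ F(x) ≤ f(x) x` for all `x ≥ M`. -/
theorem stmt_16 (p : ℝ) (hp : 1 < p)
    (f F : ℝ → ℝ)
    (hf : ∀ x, 0 ≤ x → f x = x ^ (p - 1) * Real.log (1 + x))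
    (hF : ∀ x, F x = ∫ u in (0:ℝ)..x, f u) :
    ∀ γ, p < γ → ¬ ∃ M, 0 < M ∧ ∀ x, M ≤ x → γ * F x ≤ f x * x := by
  intro γ hγ ⟨M, hM, hAR⟩
  have hp0 : (0:ℝ) < p := by linarith
  have hγ0 : (0:ℝ) < γ := by linarith
  -- choose t with t^p = (γ-p)/(2γ)
  set a : ℝ := (γ - p) / (2 * γ) with ha
  have ha0 : 0 < a := div_pos (by linarith) (by linarith)
  have ha1 : a < 1 := by
    rw [div_lt_one (by positivity)]; linarith
  set t : ℝ := a ^ (p⁻¹) with ht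
  have ht0 : 0 < t := Real.rpow_pos_of_pos ha0 _
  have ht1 : t < 1 := Real.rpow_lt_one ha0.le ha1 (by positivity)
  have htp : t ^ p = a := Real.rpow_inv_rpow ha0.le hp0.ne'
  set c : ℝ := (γ + p) / (2 * p) with hc
  have hc1 : 1 < c := by
    rw [lt_div_iff₀ (by positivity)]; linarith
  -- continuity of the integrand
  have hcontg : Continuous fun s : ℝ => s ^ (p - 1) := by
    exact Real.continuous_rpow_const (by linarith)
  -- key inequality for x ≥ max M 1
  have key : ∀ x : ℝ, M ≤ x → 1 ≤ x → x ^ (c - 1) ≤ 2 / t ^ c := by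
    intro x hMx h1x
    have hx0 : (0:ℝ) < x := lt_of_lt_of_le one_pos h1x
    have htx : 0 < t * x := by positivity
    have htxx : t * x ≤ x := by nlinarith
    -- f equals g on [0, x]
    have hfg : EqOn f (fun s => s ^ (p - 1) * Real.log (1 + s)) (Set.uIcc 0 x) := by
      intro s hs
      rw [Set.uIcc_of_le hx0.le] at hs
      exact hf s hs.1
    have hcontlog : ContinuousOn (fun s : ℝ => s ^ (p - 1) * Real.log (1 + s))
        (Set.Icc 0 x) := by
      apply ContinuousOn.mul hcontg.continuousOn
      apply ContinuousOn.log (by fun_prop)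
      intro s hs; have := hs.1; nlinarith
    have hint : ∀ u v : ℝ, 0 ≤ u → v ≤ x → u ≤ v →
        IntervalIntegrable f MeasureTheory.volume u v := by
      intro u v hu hv huv
      refine ((hcontlog.mono ?_).intervalIntegrable).congr ?_
      · rw [Set.uIcc_of_le huv]
        exact Set.Icc_subset_Icc hu hv
      · intro s hs
        rw [Set.uIoc_of_le huv] at hs
        have hmem : s ∈ Set.uIcc 0 x := by
          rw [Set.uIcc_of_le hx0.le]
          exact ⟨hu.trans hs.1.le, hs.2.trans hv⟩
        exact (hfg hmem).symm
    -- F x splits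
    have hsplit : F x = (∫ u in (0:ℝ)..(t*x), f u) + ∫ u in (t*x)..x, f u := by
      rw [hF, ← intervalIntegral.integral_add_adjacent_intervals
        (hint 0 (t*x) le_rfl htxx htx.le) (hint (t*x) x htx.le le_rfl htxx)]
    -- first integral nonneg
    have h1 : 0 ≤ ∫ u in (0:ℝ)..(t*x), f u := by
      apply intervalIntegral.integral_nonneg htx.le
      intro s hs
      rw [hf s hs.1]
      have : 0 ≤ Real.log (1 + s) := Real.log_nonneg (by linarith [hs.1])
      exact mul_nonneg (Real.rpow_nonneg hs.1 _) this
    -- lower bound for second integral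
    have h2 : Real.log (1 + t*x) * ((x ^ p - (t*x) ^ p) / p) ≤ ∫ u in (t*x)..x, f u := by
      have heq : ∫ u in (t*x)..x, Real.log (1 + t*x) * u ^ (p-1)
          = Real.log (1 + t*x) * ((x ^ p - (t*x) ^ p) / p) := by
        rw [intervalIntegral.integral_const_mul, integral_rpow (Or.inl (by linarith))]
        ring_nf
      rw [← heq]
      apply intervalIntegral.integral_mono_on htxx
        ((continuous_const.mul hcontg).intervalIntegrable _ _)
        (hint (t*x) x htx.le le_rfl htxx)
      intro s hs
      rw [hf s (htx.le.trans hs.1)]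
      have hlog : Real.log (1 + t*x) ≤ Real.log (1 + s) :=
        Real.log_le_log (by linarith) (by linarith [hs.1])
      have hlog0 : 0 ≤ Real.log (1 + t*x) := Real.log_nonneg (by linarith)
      have hs0 : (0:ℝ) ≤ s ^ (p-1) := Real.rpow_nonneg (htx.le.trans hs.1) _
      calc Real.log (1 + t*x) * s ^ (p-1) ≤ Real.log (1 + s) * s ^ (p-1) := by nlinarith
        _ = s ^ (p-1) * Real.log (1 + s) := by ring
    -- combine with AR hypothesis
    have hFx : Real.log (1 + t*x) * ((x ^ p - (t*x) ^ p) / p) ≤ F x := by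
      rw [hsplit]; linarith
    have hfx : f x * x = x ^ p * Real.log (1 + x) := by
      rw [hf x hx0.le]
      have : x ^ p = x ^ (p - 1) * x := by
        rw [← Real.rpow_add_one hx0.ne' (p-1)]; ring_nf
      rw [this]; ring
    have hAR' := hAR x hMx
    rw [hfx] at hAR'
    have htxp : (t*x) ^ p = a * x ^ p := by
      rw [Real.mul_rpow ht0.le hx0.le, htp]
    have hxp0 : (0:ℝ) < x ^ p := Real.rpow_pos_of_pos hx0 _
    have hlog0 : 0 ≤ Real.log (1 + t*x) := Real.log_nonneg (by linarith)
    -- γ * log(1+tx) * (1-a)/p * x^p ≤ x^p * log(1+x)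
    have hmain : c * Real.log (1 + t*x) ≤ Real.log (1 + x) := by
      have h3 : γ * (Real.log (1 + t*x) * ((x ^ p - a * x ^ p) / p)) ≤ x ^ p * Real.log (1+x) := by
        rw [← htxp]
        calc γ * (Real.log (1 + t*x) * ((x ^ p - (t*x) ^ p) / p)) ≤ γ * F x := by
              apply mul_le_mul_of_nonneg_left hFx hγ0.le
          _ ≤ x ^ p * Real.log (1 + x) := hAR'
      have heq2 : γ * (Real.log (1 + t*x) * ((x ^ p - a * x ^ p) / p))
          = (c * Real.log (1 + t*x)) * x ^ p := by
        rw [ha, hc]; field_simp; ring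
      rw [heq2] at h3
      exact le_of_mul_le_mul_right (by linarith) hxp0
    -- exponentiate: (1+tx)^c ≤ 1+x
    have hexp : (1 + t*x) ^ c ≤ 1 + x := by
      have h1tx : (0:ℝ) < 1 + t*x := by linarith
      rw [Real.rpow_def_of_pos h1tx, ← Real.exp_log (show (0:ℝ) < 1 + x by linarith)]
      exact Real.exp_le_exp.mpr (by rw [mul_comm]; exact hmain)
    have h4 : (t*x) ^ c ≤ 2 * x := by
      calc (t*x) ^ c ≤ (1 + t*x) ^ c :=
            Real.rpow_le_rpow htx.le (by linarith) (by linarith)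
        _ ≤ 1 + x := hexp
        _ ≤ 2 * x := by linarith
    have htc : (0:ℝ) < t ^ c := Real.rpow_pos_of_pos ht0 _
    rw [Real.mul_rpow ht0.le hx0.le] at h4
    have hxc : x ^ c = x ^ (c - 1) * x := by
      rw [← Real.rpow_add_one hx0.ne' (c-1)]; ring_nf
    rw [hxc] at h4
    rw [le_div_iff₀ htc]
    nlinarith [h4, hx0, Real.rpow_nonneg hx0.le (c-1)]
  -- contradiction: x^(c-1) → ∞
  have hcpos : (0:ℝ) < c - 1 := by linarith
  have htend := tendsto_rpow_atTop hcpos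
  have htc : (0:ℝ) < t ^ c := Real.rpow_pos_of_pos ht0 _
  obtain ⟨x, hx1, hx2⟩ :=
    ((htend.eventually_gt_atTop (2 / t ^ c)).and (eventually_ge_atTop (max M 1))).exists
  exact absurd (key x (le_trans (le_max_left _ _) hx2) (le_trans (le_max_right _ _) hx2))
    (not_le.mpr hx1)
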